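/- In any Banach lattice F possessing a strong order unit e (so that the closed unit ball equals the order interval [-e, e]), every norm bounded disjoint sequence is weakly null. -/

import Mathlib

open Filter Topology

noncomputable section

/-- A set `A` in a normed space is relatively weakly compact if its closure in the weak
topology is compact. -/
def RelWeaklyCompact {Y : Type*} [NormedAddCommGroup Y] [NormedSpace ℝ Y] (A : Set Y) : Prop :=
  IsCompact (closure (toWeakSpace ℝ Y '' A))

/-- A sequence in a normed space is weakly null if it tends to `0` in the weak topology. -/
def WeaklyNullSeq {F : Type*} [NormedAddCommGroup F] [NormedSpace ℝ F] (x : ℕ → F) : Prop :=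
  Tendsto (fun n => toWeakSpace ℝ F (x n)) atTop (𝓝 0)

/-- The weak Dunford–Pettis property of a Banach lattice `F`: every weakly compact operator
from `F` into a Banach space maps disjoint weakly null sequences to norm null sequences. -/
def HasWDP (F : Type*) [NormedAddCommGroup F] [Lattice F] [HasSolidNorm F] [IsOrderedAddMonoid F] [NormedSpace ℝ F] : Prop :=
  ∀ (Y : Type) [NormedAddCommGroup Y] [NormedSpace ℝ Y] [CompleteSpace Y],
    ∀ S : F →L[ℝ] Y, RelWeaklyCompact (S '' Metric.closedBall 0 1) →
      ∀ x : ℕ → F, (Pairwise fun n m => |x n| ⊓ |x m| = 0) → WeaklyNullSeq x →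
        Tendsto (fun n => ‖S (x n)‖) atTop (𝓝 0)
section Aux
variable {F : Type*} [NormedAddCommGroup F] [Lattice F] [HasSolidNorm F] [IsOrderedAddMonoid F]

lemma aux_inf_add {a b c : F}
    (ha : 0 ≤ a) (hb : 0 ≤ b) (hc : 0 ≤ c) (hab : a ⊓ b = 0) (hac : a ⊓ c = 0) :
    a ⊓ (b + c) = 0 := by
  refine le_antisymm ?_ (le_inf ha (add_nonneg hb hc))
  have key : a ⊓ (b + c) - (a ⊓ c) ≤ a ⊓ b := by
    apply le_inf
    · rw [sub_le_iff_le_add]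
      exact le_add_of_le_of_nonneg inf_le_left (le_inf ha hc)
    · rw [sub_le_iff_le_add, add_inf]
      exact le_inf (inf_le_left.trans (le_add_of_nonneg_left hb)) inf_le_right
  rw [hac, sub_zero, hab] at key
  exact key

lemma aux_nsmul_inf {a b : F} (ha : 0 ≤ a) (hb : 0 ≤ b) (hab : a ⊓ b = 0) (m : ℕ) :
    (m • a) ⊓ b = 0 := by
  induction m with
  | zero => simpa using inf_of_le_left hb
  | succ m ih =>
    rw [succ_nsmul, inf_comm]
    exact aux_inf_add hb (nsmul_nonneg ha m) ha
      (by rw [inf_comm]; exact ih) (by rw [inf_comm]; exact hab)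

/-- Isolation property of lattice ordered groups: `0 ≤ m • b` implies `0 ≤ b`. -/
lemma aux_nonneg_of_nsmul {m : ℕ} (hm : 1 ≤ m) {b : F} (h : 0 ≤ m • b) : 0 ≤ b := by
  have hdec : m • b = m • b⁺ - m • b⁻ := by
    rw [← smul_sub, posPart_sub_negPart]
  have hle : m • b⁻ ≤ m • b⁺ := by
    rw [hdec, sub_nonneg] at h
    exact h
  have h1 : (m • b⁻) ⊓ b⁺ = 0 :=
    aux_nsmul_inf (negPart_nonneg b) (posPart_nonneg b)
      (by rw [inf_comm]; exact posPart_inf_negPart_eq_zero b) m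
  have hinf : (m • b⁻) ⊓ (m • b⁺) = 0 := by
    rw [inf_comm]
    exact aux_nsmul_inf (posPart_nonneg b) (nsmul_nonneg (negPart_nonneg b) m)
      (by rw [inf_comm]; exact h1) m
  have hzero : m • b⁻ = 0 := by
    rw [← hinf]
    exact (inf_eq_left.mpr hle).symm
  have hbn : b⁻ = 0 := by
    have hb1 : b⁻ ≤ m • b⁻ := by
      calc b⁻ = 1 • b⁻ := (one_smul ℕ _).symm
        _ ≤ m • b⁻ := nsmul_le_nsmul_left (negPart_nonneg b) hm
    exact le_antisymm (hzero ▸ hb1) (negPart_nonneg b)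
  exact negPart_eq_zero.mp hbn

end Aux

/-- In a Banach lattice `F` with a strong order unit `e` for which the closed unit ball is the
order interval `[-e, e]`, every norm bounded disjoint sequence is weakly null. -/
theorem stmt_9 (F : Type) [NormedAddCommGroup F] [Lattice F] [HasSolidNorm F] [IsOrderedAddMonoid F] [NormedSpace ℝ F] [CompleteSpace F]
    (e : F) (he : Metric.closedBall (0 : F) 1 = Set.Icc (-e) e)
    (x : ℕ → F) (hbdd : ∃ C, ∀ n, ‖x n‖ ≤ C)
    (hdisj : Pairwise fun n m => |x n| ⊓ |x m| = 0) :
    WeaklyNullSeq x := by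
  obtain ⟨C, hC⟩ := hbdd
  set k : ℕ := max ⌈C⌉₊ 1 with hkdef
  have hk1 : 1 ≤ k := le_max_right _ _
  have hkpos : (0 : ℝ) < (k : ℝ) := by exact_mod_cast lt_of_lt_of_le one_pos hk1
  have hxk : ∀ n, ‖x n‖ ≤ (k : ℝ) := fun n =>
    (hC n).trans ((Nat.le_ceil C).trans (by exact_mod_cast le_max_left ⌈C⌉₊ 1))
  have he0 : 0 ≤ e := by
    have h0 : (0 : F) ∈ Metric.closedBall (0 : F) 1 := Metric.mem_closedBall_self zero_le_one
    rw [he] at h0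
    exact h0.2
  -- from ‖z‖ ≤ k deduce |z| ≤ k • e
  have norm_to_order : ∀ z : F, ‖z‖ ≤ (k : ℝ) → |z| ≤ k • e := by
    intro z hz
    set w : F := ((k : ℝ))⁻¹ • z with hw
    have hmem : w ∈ Metric.closedBall (0 : F) 1 := by
      rw [mem_closedBall_zero_iff, hw, norm_smul, norm_inv, Real.norm_of_nonneg hkpos.le,
        inv_mul_le_one₀ hkpos]
      exact hz
    rw [he, Set.mem_Icc] at hmem
    have hzw : z = k • w := by
      rw [hw, ← Nat.cast_smul_eq_nsmul ℝ, smul_smul, mul_inv_cancel₀ hkpos.ne', one_smul]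
    rw [abs_le']
    refine ⟨?_, ?_⟩
    · rw [hzw]; exact nsmul_le_nsmul_right hmem.2 k
    · rw [hzw, ← smul_neg]; exact nsmul_le_nsmul_right (neg_le.mpr hmem.1) k
  -- converse: from |z| ≤ k • e deduce ‖z‖ ≤ k
  have order_to_norm : ∀ z : F, |z| ≤ k • e → ‖z‖ ≤ (k : ℝ) := by
    intro z hz
    rw [abs_le'] at hz
    set w : F := ((k : ℝ))⁻¹ • z with hw
    have hzw : z = k • w := by
      rw [hw, ← Nat.cast_smul_eq_nsmul ℝ, smul_smul, mul_inv_cancel₀ hkpos.ne', one_smul]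
    have h1 : w ≤ e := by
      have hsm : (0 : F) ≤ k • (e - w) := by
        rw [smul_sub, sub_nonneg, ← hzw]
        exact hz.1
      have := aux_nonneg_of_nsmul hk1 hsm
      exact sub_nonneg.mp this
    have h2 : -e ≤ w := by
      have hneg : -(k • w) ≤ k • e := by rw [← hzw]; exact hz.2
      have hsm : (0 : F) ≤ k • (e + w) := by
        rw [smul_add, ← sub_neg_eq_add]
        exact sub_nonneg.mpr hneg
      have h0 := aux_nonneg_of_nsmul hk1 hsm
      rw [← sub_neg_eq_add, sub_nonneg] at h0
      exact neg_le.mp h0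
    have hmem : w ∈ Metric.closedBall (0 : F) 1 := by
      rw [he, Set.mem_Icc]; exact ⟨h2, h1⟩
    rw [mem_closedBall_zero_iff, hw, norm_smul, norm_inv, Real.norm_of_nonneg hkpos.le,
      inv_mul_le_one₀ hkpos] at hmem
    exact hmem
  have hxle : ∀ n, |x n| ≤ k • e := fun n => norm_to_order _ (hxk n)
  -- disjointness of one term from sums
  have hd : ∀ (S : Finset ℕ) (j : ℕ), j ∉ S → |x j| ⊓ ∑ n ∈ S, |x n| = 0 := by
    intro S
    induction S using Finset.induction_on with
    | empty => intro j _; simpa using inf_of_le_right (abs_nonneg (x j))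
    | @insert i S hi ih =>
      intro j hj
      rw [Finset.sum_insert hi]
      exact aux_inf_add (abs_nonneg _) (abs_nonneg _)
        (Finset.sum_nonneg fun n _ => abs_nonneg _)
        (hdisj (fun h => hj (h ▸ Finset.mem_insert_self i S)))
        (ih j (fun h => hj (Finset.mem_insert_of_mem h)))
  -- sums of |x n| are bounded by k • e
  have hsum_le : ∀ S : Finset ℕ, ∑ n ∈ S, |x n| ≤ k • e := by
    intro S
    induction S using Finset.induction_on with
    | empty => simpa using nsmul_nonneg he0 k
    | @insert i S hi ih =>
      rw [Finset.sum_insert hi]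
      have h0 : |x i| ⊓ ∑ n ∈ S, |x n| = 0 := hd S i hi
      have heq : |x i| + ∑ n ∈ S, |x n| = |x i| ⊔ ∑ n ∈ S, |x n| := by
        rw [← inf_add_sup, h0, zero_add]
      rw [heq]
      exact sup_le (hxle i) ih
  have habs_sum : ∀ (S : Finset ℕ) (g : ℕ → F), |∑ n ∈ S, g n| ≤ ∑ n ∈ S, |g n| := by
    intro S g
    induction S using Finset.induction_on with
    | empty => simp
    | @insert i S hi ih =>
      rw [Finset.sum_insert hi, Finset.sum_insert hi]
      exact (abs_add_le _ _).trans (add_le_add_right ih _)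
  -- injectivity for weak topology criterion
  have hinj : Function.Injective ⇑((topDualPairing ℝ F).flip) := by
    intro a b h
    by_contra hne
    obtain ⟨f, hf⟩ := SeparatingDual.exists_ne_zero (R := ℝ) (sub_ne_zero_of_ne hne)
    have hfa : f a = f b := by
      simpa [topDualPairing_apply] using LinearMap.congr_fun h f
    simp [map_sub, hfa] at hf
  rw [WeaklyNullSeq]
  refine (WeakBilin.tendsto_iff_forall_eval_tendsto (B := (topDualPairing ℝ F).flip)
    (f := fun n => toWeakSpace ℝ F (x n)) (x := (0 : WeakSpace ℝ F)) hinj).mpr ?_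
  intro f
  change Tendsto (fun n => (topDualPairing ℝ F).flip (toWeakSpace ℝ F (x n)) f) atTop (𝓝 (f 0))
  rw [map_zero]
  have hev : (fun n => (topDualPairing ℝ F).flip (toWeakSpace ℝ F (x n)) f) = fun n => f (x n) :=
    rfl
  rw [hev]
  have hsummable : Summable fun n => f (x n) := by
    apply Summable.of_abs
    apply summable_of_sum_range_le (c := ‖f‖ * k) (fun n => abs_nonneg _)
    intro N
    set ε : ℕ → ℝ := fun n => if 0 ≤ f (x n) then 1 else -1 with hε
    set y : F := ∑ n ∈ Finset.range N, ε n • x n with hy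
    have hfy : f y = ∑ n ∈ Finset.range N, |f (x n)| := by
      rw [hy, map_sum]
      refine Finset.sum_congr rfl fun n _ => ?_
      rw [map_smul, smul_eq_mul, hε]
      by_cases h : 0 ≤ f (x n)
      · simp [h, abs_of_nonneg h]
      · simp [h, abs_of_neg (lt_of_not_ge h)]
    have hyabs : |y| ≤ k • e := by
      refine (habs_sum _ _).trans ?_
      have hcong : ∀ n ∈ Finset.range N, |ε n • x n| = |x n| := by
        intro n _
        rw [hε]
        by_cases h : 0 ≤ f (x n)
        · simp [h]
        · simp [h]
      rw [Finset.sum_congr rfl hcong]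
      exact hsum_le _
    have hynorm : ‖y‖ ≤ (k : ℝ) := order_to_norm y hyabs
    calc ∑ n ∈ Finset.range N, |f (x n)| = f y := hfy.symm
      _ ≤ |f y| := le_abs_self _
      _ = ‖f y‖ := (Real.norm_eq_abs _).symm
      _ ≤ ‖f‖ * ‖y‖ := f.le_opNorm y
      _ ≤ ‖f‖ * k := mul_le_mul_of_nonneg_left hynorm (norm_nonneg f)
  exact hsummable.tendsto_atTop_zero
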